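/- For every integer n ≥ 2, the isometry group of the n-sphere is nonfixating. Equivalently: for every n ≥ 2 there exists a subgroup G of the orthogonal group O(n+1) (real orthogonal (n+1)×(n+1) matrices) such that every A ∈ G has a nonzero fixed vector in ℝ^{n+1} (A·v = v for some v ≠ 0), yet no nonzero vector of ℝ^{n+1} is fixed by all elements of G. -/

import Mathlib

namespace IsomSphereAux

variable (n : ℕ)

/-- coordinate characters: which elements of the Klein group flip coordinate `i`. -/
def c (i : Fin (n + 1)) (p : ZMod 2 × ZMod 2) : ZMod 2 :=
  if (i : ℕ) = 0 then p.1 else if (i : ℕ) = 1 then p.1 + p.2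
    else if (i : ℕ) = 2 then p.2 else p.1

/-- diagonal entries -/
def d (i : Fin (n + 1)) (p : ZMod 2 × ZMod 2) : ℝ := (-1 : ℝ) ^ (c n i p).val

lemma neg_one_pow_val_add (x y : ZMod 2) :
    ((-1 : ℝ)) ^ ((x + y).val) = (-1 : ℝ) ^ x.val * (-1 : ℝ) ^ y.val := by
  have h0 : ZMod.val (0 : ZMod 2) = 0 := by decide
  have h1 : ZMod.val (1 : ZMod 2) = 1 := by decide
  have h2 : ZMod.val (2 : ZMod 2) = 0 := by decide
  rw [ZMod.val_add, ← neg_one_pow_eq_pow_mod_two, pow_add]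

lemma d_add (i : Fin (n + 1)) (p q : ZMod 2 × ZMod 2) :
    d n i (p + q) = d n i p * d n i q := by
  unfold d c
  split_ifs <;> simp [Prod.fst_add, Prod.snd_add, neg_one_pow_val_add] <;> ring

lemma d_zero (i : Fin (n + 1)) : d n i 0 = 1 := by
  unfold d c
  split_ifs <;> simp

/-- the diagonal sign matrix attached to `p`. -/
def M (p : ZMod 2 × ZMod 2) : Matrix (Fin (n + 1)) (Fin (n + 1)) ℝ :=
  Matrix.diagonal fun i => d n i p

lemma M_mul (p q : ZMod 2 × ZMod 2) : M n p * M n q = M n (p + q) := by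
  unfold M
  rw [Matrix.diagonal_mul_diagonal]
  exact congrArg Matrix.diagonal (funext fun i => (d_add n i p q).symm)

lemma M_star (p : ZMod 2 × ZMod 2) : star (M n p) = M n p := by
  unfold M
  simp [Matrix.star_eq_conjTranspose, Matrix.diagonal_conjTranspose]

lemma M_sq (p : ZMod 2 × ZMod 2) : M n p * M n p = 1 := by
  rw [M_mul]
  have : p + p = 0 := by
    ext <;> simp [ZMod.natCast_self] <;>
      · rcases p with ⟨x, y⟩
        fin_cases x <;> fin_cases y <;> decide
  rw [this]
  unfold M
  simp [d_zero]

lemma M_mem (p : ZMod 2 × ZMod 2) : M n p ∈ Matrix.orthogonalGroup (Fin (n + 1)) ℝ := by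
  have hs := M_star n p
  rw [Matrix.star_eq_conjTranspose, Matrix.conjTranspose_eq_transpose_of_trivial] at hs
  rw [Matrix.mem_orthogonalGroup_iff, hs, M_sq]

/-- The subgroup. -/
def G : Subgroup (Matrix.orthogonalGroup (Fin (n + 1)) ℝ) where
  carrier := {A | ∃ p, (A : Matrix (Fin (n + 1)) (Fin (n + 1)) ℝ) = M n p}
  one_mem' := ⟨0, by unfold M; simp [d_zero]⟩
  mul_mem' := by
    rintro a b ⟨p, hp⟩ ⟨q, hq⟩
    exact ⟨p + q, by push_cast [hp, hq]; rw [M_mul]⟩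
  inv_mem' := by
    rintro a ⟨p, hp⟩
    refine ⟨p, ?_⟩
    have h2 : a * a = 1 := by
      apply Subtype.ext
      push_cast [hp]
      exact M_sq n p
    rw [inv_eq_of_mul_eq_one_left h2, hp]

end IsomSphereAux

/-- For every `n ≥ 2`, the isometry group of the `n`-sphere is nonfixating:
there exists a subgroup `G` of the orthogonal group `O(n+1)` such that every
element of `G` has a nonzero fixed vector in `ℝ^(n+1)`, yet no nonzero vector
is fixed by all elements of `G`. -/
theorem isom_sphere_nonfixating
    (n : ℕ) (hn : 2 ≤ n) :
    ∃ G : Subgroup (Matrix.orthogonalGroup (Fin (n + 1)) ℝ),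
      (∀ A ∈ G, ∃ v : Fin (n + 1) → ℝ, v ≠ 0 ∧
        Matrix.mulVec (A : Matrix (Fin (n + 1)) (Fin (n + 1)) ℝ) v = v) ∧
      ¬ ∃ v : Fin (n + 1) → ℝ, v ≠ 0 ∧ ∀ A ∈ G,
        Matrix.mulVec (A : Matrix (Fin (n + 1)) (Fin (n + 1)) ℝ) v = v := by
  classical
  open IsomSphereAux in
  refine ⟨IsomSphereAux.G n, ?_, ?_⟩
  · rintro A ⟨p, hp⟩
    -- pick the coordinate fixed by `M p`
    rcases p with ⟨x, y⟩
    have h3 : 3 ≤ n + 1 := by omega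
    -- index j with d j (x,y) = 1
    obtain ⟨j, hj⟩ : ∃ j : Fin (n + 1), d n j (x, y) = 1 := by
      have h1 : ZMod.val (1 : ZMod 2) = 1 := by decide
      have h11 : ((1 : ZMod 2) + 1) = 0 := by decide
      fin_cases x <;> fin_cases y
      · exact ⟨⟨0, by omega⟩, by simp [d, c]; exact pow_zero _⟩
      · exact ⟨⟨0, by omega⟩, by simp [d, c]; exact pow_zero _⟩
      · exact ⟨⟨2, by omega⟩, by simp [d, c]; exact pow_zero _⟩
      · exact ⟨⟨1, by omega⟩, by simp [d, c, h11]; exact pow_zero _⟩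
    refine ⟨Pi.single j 1, ?_, ?_⟩
    · intro h
      have := congrFun h j
      simp at this
    · funext i
      rw [hp]
      unfold M
      rw [Matrix.mulVec_diagonal]
      by_cases hij : i = j
      · subst hij; rw [hj, one_mul]
      · rw [Pi.single_eq_of_ne hij, mul_zero]
  · rintro ⟨v, hv, hfix⟩
    apply hv
    have ha := hfix ⟨M n (1, 0), M_mem n _⟩ ⟨(1, 0), rfl⟩
    have hb := hfix ⟨M n (0, 1), M_mem n _⟩ ⟨(0, 1), rfl⟩
    funext i
    have key : ∀ p : ZMod 2 × ZMod 2, d n i p = -1 →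
        Matrix.mulVec (M n p) v = v → v i = 0 := by
      intro p hd hfp
      have := congrFun hfp i
      unfold M at this
      rw [Matrix.mulVec_diagonal, hd] at this
      linarith
    have h1 : ZMod.val (1 : ZMod 2) = 1 := by decide
    by_cases h2 : (i : ℕ) = 2
    · exact key (0, 1) (by simp [d, c, h2, h1]) hb
    · refine key (1, 0) ?_ ha
      unfold d c
      split_ifs <;> simp [h1]
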